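/- arXiv:1701.09071 — 4 statements merged into one kernel-verified Lean document; each statement's English description precedes it below -/
import Mathlib

section
/- Let $p \in (1, 2)$, $K \geq 0$, and set $\vartheta(\varepsilon, p) = \sqrt{\tfrac{1}{2}\left(\tfrac{p-1}{2\varepsilon}\right)^{2/(2-p)} + \tfrac{1}{2}} - 1$ for $\varepsilon > 0$. Then there exists $\varepsilon \in (0, \tfrac{p-1}{2})$ such that for all $a, b \in \mathbb{R}^d$: $|a+b|^p - |a|^p - p|a|^{p-2}\langle a, b\rangle \mathbf{1}_{a \neq 0} \geq 2Kp|a|^{p-1}|b|\mathbf{1}_{|b| \geq \vartheta(\varepsilon,p)|a|} + p\varepsilon |a|^{p-2}|b|^2 \mathbf{1}_{|b| < \vartheta(\varepsilon,p)|a|}$. -/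
open Real Set

section aux
variable {E : Type*} [NormedAddCommGroup E] [InnerProductSpace ℝ E]

local notation "⟪" x ", " y "⟫" => @inner ℝ _ _ x y

lemma line_hasDerivAt (a b : E) (t : ℝ) :
    HasDerivAt (fun t : ℝ => a + t • b) b t := by
  simpa using ((hasDerivAt_id t).smul_const b).const_add a

lemma gderiv {p : ℝ} (hp : 1 < p) (a b : E) (t : ℝ) :
    HasDerivAt (fun t : ℝ => ‖a + t • b‖ ^ p)
      (p * ‖a + t • b‖ ^ (p - 2) * ⟪a + t • b, b⟫) t := by
  have h := (hasFDerivAt_norm_rpow (a + t • b) hp).comp_hasDerivAt t (line_hasDerivAt a b t)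
  exact h.congr_deriv (by simp [inner_add_left, real_inner_smul_left]; ring)

lemma psi_cont {p : ℝ} (hp : 1 < p) (a b : E) :
    Continuous (fun t : ℝ => p * ‖a + t • b‖ ^ (p - 2) * ⟪a + t • b, b⟫) := by
  have h1 : Continuous (fun x : E => fderiv ℝ (fun y : E => ‖y‖ ^ p) x) :=
    (contDiff_one_iff_fderiv.mp (contDiff_norm_rpow hp)).2
  have h2 : Continuous (fun t : ℝ => a + t • b) := by continuity
  have h3 : Continuous (fun t : ℝ => (fderiv ℝ (fun y : E => ‖y‖ ^ p) (a + t • b)) b) :=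
    (h1.comp h2).clm_apply continuous_const
  refine h3.congr (fun t => ?_)
  rw [fderiv_norm_rpow (a + t • b) hp]
  simp [inner_add_left, real_inner_smul_left, mul_assoc]
  ring

lemma psideriv {p : ℝ} (a b : E) {t : ℝ} (hv : a + t • b ≠ 0) :
    HasDerivAt (fun t : ℝ => p * ‖a + t • b‖ ^ (p - 2) * ⟪a + t • b, b⟫)
      (p * ((p - 2) * ‖a + t • b‖ ^ (p - 4) * ⟪a + t • b, b⟫ ^ 2
            + ‖a + t • b‖ ^ (p - 2) * ‖b‖ ^ 2)) t := by
  have hvpos : (0:ℝ) < ‖a + t • b‖ := norm_pos_iff.mpr hv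
  have hn : HasDerivAt (fun t : ℝ => ⟪a + t • b, a + t • b⟫)
      (2 * ⟪a + t • b, b⟫) t := by
    have := (line_hasDerivAt a b t).inner ℝ (line_hasDerivAt a b t)
    refine this.congr_deriv ?_
    rw [real_inner_comm]
    ring
  have hw : HasDerivAt (fun t : ℝ => ⟪a + t • b, b⟫) (‖b‖ ^ 2) t := by
    have := (line_hasDerivAt a b t).inner ℝ (hasDerivAt_const t b)
    simpa [real_inner_self_eq_norm_sq] using this
  have hnt : ∀ s : ℝ, ⟪a + s • b, a + s • b⟫ = ‖a + s • b‖ ^ 2 := fun s =>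
    real_inner_self_eq_norm_sq _
  have hpow : ∀ s : ℝ, (‖a + s • b‖ ^ 2 : ℝ) ^ ((p-2)/2) = ‖a + s • b‖ ^ (p - 2) := by
    intro s
    rw [← Real.rpow_natCast_mul (norm_nonneg _) 2 ((p-2)/2)]
    congr 1
    push_cast
    ring
  have hh : HasDerivAt (fun s : ℝ => ⟪a + s • b, a + s • b⟫ ^ ((p-2)/2))
      ((p-2) * ‖a + t • b‖ ^ (p - 4) * ⟪a + t • b, b⟫) t := by
    have h := hn.rpow_const (p := (p-2)/2) (Or.inl (by rw [hnt t]; positivity))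
    convert h using 1
    rw [hnt t]
    have e1 : (‖a + t • b‖ ^ 2 : ℝ) ^ ((p-2)/2 - 1) = ‖a + t • b‖ ^ (p - 4) := by
      rw [← Real.rpow_natCast_mul (norm_nonneg _) 2 ((p-2)/2 - 1)]
      congr 1
      push_cast
      ring
    rw [e1]
    ring
  have hmain : HasDerivAt (fun s : ℝ => p * (⟪a + s • b, a + s • b⟫ ^ ((p-2)/2) * ⟪a + s • b, b⟫))
      (p * (((p-2) * ‖a + t • b‖ ^ (p - 4) * ⟪a + t • b, b⟫) * ⟪a + t • b, b⟫
        + ‖a + t • b‖ ^ (p - 2) * ‖b‖ ^ 2)) t := by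
    have := (hh.mul hw).const_mul p
    refine this.congr_deriv ?_
    rw [hnt t, hpow t]
  have heq : (fun s : ℝ => p * (⟪a + s • b, a + s • b⟫ ^ ((p-2)/2) * ⟪a + s • b, b⟫))
      = fun s : ℝ => p * ‖a + s • b‖ ^ (p - 2) * ⟪a + s • b, b⟫ := by
    funext s
    rw [hnt s, hpow s]
    ring
  rw [heq] at hmain
  convert hmain using 1
  ring

lemma core {p : ℝ} (hp : 1 < p) (hp2 : p < 2) (a b : E) :
    p * (p - 1) / 2 * (‖a‖ + ‖b‖) ^ (p - 2) * ‖b‖ ^ 2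
      ≤ ‖a + b‖ ^ p - ‖a‖ ^ p - p * ‖a‖ ^ (p - 2) * ⟪a, b⟫ := by
  rcases eq_or_ne b 0 with rfl | hb
  · simp
  have hbpos : (0:ℝ) < ‖b‖ := norm_pos_iff.mpr hb
  set m : ℝ := p * (p - 1) * (‖a‖ + ‖b‖) ^ (p - 2) * ‖b‖ ^ 2 with hmdef
  have hppos : (0:ℝ) < p := by linarith
  set ψ : ℝ → ℝ := fun t => p * ‖a + t • b‖ ^ (p - 2) * ⟪a + t • b, b⟫ - m * t with hψdef
  set φ : ℝ → ℝ := fun t => ‖a + t • b‖ ^ p - m * (t ^ 2 / 2) with hφdef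
  have hφψ : ∀ t : ℝ, HasDerivAt φ (ψ t) t := by
    intro t
    have h2 : HasDerivAt (fun t : ℝ => m * (t ^ 2 / 2)) (m * t) t := by
      have := ((hasDerivAt_pow 2 t).div_const 2).const_mul m
      refine this.congr_deriv ?_
      push_cast
      ring
    exact (gderiv hp a b t).sub h2
  -- derivative bound for ψ at good points
  have haux : ∀ t : ℝ, t ∈ Icc (0:ℝ) 1 → a + t • b ≠ 0 →
      ∃ dd : ℝ, HasDerivAt ψ dd t ∧ 0 ≤ dd := by
    intro t ht hv
    have hvpos : (0:ℝ) < ‖a + t • b‖ := norm_pos_iff.mpr hv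
    refine ⟨p * ((p - 2) * ‖a + t • b‖ ^ (p - 4) * ⟪a + t • b, b⟫ ^ 2
            + ‖a + t • b‖ ^ (p - 2) * ‖b‖ ^ 2) - m, ?_, ?_⟩
    · exact (psideriv a b hv).sub (by simpa using (hasDerivAt_id t).const_mul m)
    · -- nonnegativity
      have hcs : ⟪a + t • b, b⟫ ^ 2 ≤ ‖a + t • b‖ ^ 2 * ‖b‖ ^ 2 := by
        have h := abs_real_inner_le_norm (a + t • b) b
        nlinarith [abs_nonneg (⟪a + t • b, b⟫ : ℝ), sq_abs (⟪a + t • b, b⟫ : ℝ),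
          norm_nonneg (a + t • b), norm_nonneg b]
      have h44 : ‖a + t • b‖ ^ (p - 4) * (‖a + t • b‖ ^ 2 * ‖b‖ ^ 2)
          = ‖a + t • b‖ ^ (p - 2) * ‖b‖ ^ 2 := by
        rw [← mul_assoc, ← Real.rpow_natCast ‖a + t • b‖ 2,
          ← Real.rpow_add hvpos]
        congr 1
        congr 1
        push_cast
        ring
      have hstep : (p - 2) * ‖a + t • b‖ ^ (p - 4) * ⟪a + t • b, b⟫ ^ 2
          ≥ (p - 2) * (‖a + t • b‖ ^ (p - 2) * ‖b‖ ^ 2) := by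
        rw [← h44, mul_assoc]
        apply mul_le_mul_of_nonpos_left _ (by linarith : p - 2 ≤ 0)
        exact mul_le_mul_of_nonneg_left hcs (Real.rpow_nonneg (norm_nonneg _) _)
      have hnle : ‖a + t • b‖ ≤ ‖a‖ + ‖b‖ := by
        calc ‖a + t • b‖ ≤ ‖a‖ + ‖t • b‖ := norm_add_le _ _
        _ ≤ ‖a‖ + ‖b‖ := by
            rw [norm_smul]
            simp only [Real.norm_eq_abs]
            have : |t| ≤ 1 := by rw [abs_le]; constructor <;> [linarith [ht.1]; exact ht.2]
            nlinarith [norm_nonneg b]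
      have hmono : (‖a‖ + ‖b‖) ^ (p - 2) ≤ ‖a + t • b‖ ^ (p - 2) :=
        Real.rpow_le_rpow_of_nonpos hvpos hnle (by linarith)
      have hfinal : p * ((p - 1) * (‖a + t • b‖ ^ (p - 2) * ‖b‖ ^ 2)) ≥ m := by
        rw [hmdef]
        have h5' := mul_le_mul_of_nonneg_right hmono (by positivity : (0:ℝ) ≤ ‖b‖ ^ 2)
        have h5 := mul_le_mul_of_nonneg_left h5' (by nlinarith : (0:ℝ) ≤ p * (p - 1))
        nlinarith [h5]
      nlinarith
  -- monotonicity of ψ on subintervals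
  have hmono : ∀ u v : ℝ, 0 ≤ u → v ≤ 1 → (∀ t ∈ Ioo u v, a + t • b ≠ 0) →
      MonotoneOn ψ (Icc u v) := by
    intro u v hu hv hne
    have hψc : Continuous ψ := (psi_cont hp a b).sub (continuous_const.mul continuous_id)
    apply monotoneOn_of_deriv_nonneg (convex_Icc u v) hψc.continuousOn
    · intro t ht
      rw [interior_Icc] at ht
      obtain ⟨dd, hdd, _⟩ := haux t ⟨le_trans hu ht.1.le, le_trans ht.2.le hv⟩ (hne t ht)
      exact hdd.differentiableAt.differentiableWithinAt
    · intro t ht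
      rw [interior_Icc] at ht
      obtain ⟨dd, hdd, hdd0⟩ := haux t ⟨le_trans hu ht.1.le, le_trans ht.2.le hv⟩ (hne t ht)
      rw [hdd.deriv]
      exact hdd0
  have hψmono : MonotoneOn ψ (Icc (0:ℝ) 1) := by
    by_cases hex : ∃ t₀ ∈ Icc (0:ℝ) 1, a + t₀ • b = 0
    · obtain ⟨t₀, ht₀, hz⟩ := hex
      have huniq : ∀ t : ℝ, a + t • b = 0 → t = t₀ := by
        intro t h
        have : (t - t₀) • b = 0 := by
          have := h.trans hz.symm
          have h2 := add_left_cancel this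
          rw [sub_smul, h2, sub_self]
        rcases smul_eq_zero.mp this with h' | h'
        · linarith [sub_eq_zero.mp (by exact_mod_cast h')]
        · exact absurd h' hb
      have m1 : MonotoneOn ψ (Icc 0 t₀) :=
        hmono 0 t₀ le_rfl ht₀.2 (fun t ht h0 => (ne_of_lt ht.2) (huniq t h0))
      have m2 : MonotoneOn ψ (Icc t₀ 1) :=
        hmono t₀ 1 ht₀.1 le_rfl (fun t ht h0 => (ne_of_gt ht.1) (huniq t h0))
      intro x hx y hy hxy
      rcases le_total y t₀ with h | h
      · exact m1 ⟨hx.1, hxy.trans h⟩ ⟨hy.1, h⟩ hxy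
      rcases le_total x t₀ with h' | h'
      · exact le_trans (m1 ⟨hx.1, h'⟩ ⟨ht₀.1, le_rfl⟩ h') (m2 ⟨le_rfl, ht₀.2⟩ ⟨h, hy.2⟩ h)
      · exact m2 ⟨h', hx.2⟩ ⟨h'.trans hxy, hy.2⟩ hxy
    · push_neg at hex
      exact hmono 0 1 le_rfl le_rfl (fun t ht => hex t ⟨ht.1.le, ht.2.le⟩)
  -- mean value theorem
  obtain ⟨c, hc, hcslope⟩ := exists_hasDerivAt_eq_slope φ ψ one_pos
    (fun t _ => (hφψ t).continuousAt.continuousWithinAt) (fun t _ => hφψ t)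
  have h0c : ψ 0 ≤ ψ c := hψmono ⟨le_rfl, zero_le_one⟩ ⟨hc.1.le, hc.2.le⟩ hc.1.le
  have hφ1 : φ 1 = ‖a + b‖ ^ p - m / 2 := by
    simp [hφdef]
    ring
  have hφ0 : φ 0 = ‖a‖ ^ p := by
    simp [hφdef]
  have hψ0 : ψ 0 = p * ‖a‖ ^ (p - 2) * ⟪a, b⟫ := by
    simp [hψdef]
  rw [hφ1, hφ0] at hcslope
  rw [hψ0] at h0c
  rw [hcslope] at h0c
  have : p * (p - 1) / 2 * (‖a‖ + ‖b‖) ^ (p - 2) * ‖b‖ ^ 2 = m / 2 := by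
    rw [hmdef]; ring
  rw [this]
  linarith [h0c]

end aux


lemma scalar_case1 {p K M s t : ℝ} (hp : 1 < p) (hp2 : p < 2) (hK : 0 ≤ K)
    (hM1 : 1 < M) (hMp : M ^ (p - 1) = 2 * p + 1 + 2 * K * p)
    (hs : 0 < s) (hst : M * s ≤ t) :
    2 * K * p * s ^ (p - 1) * t + p * (t ^ (p - 1) * s) + s ^ p + p * (s ^ (p - 1) * t)
      ≤ t ^ p := by
  have hM0 : (0:ℝ) < M := by linarith
  have ht : (0:ℝ) < t := lt_of_lt_of_le (by positivity) hst
  have hA0 : (0:ℝ) < 2 * p + 1 + 2 * K * p := by nlinarith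
  set A : ℝ := 2 * p + 1 + 2 * K * p with hA
  set u : ℝ := t ^ p / A with hu_def
  have hMA : M ^ (p - 1) ≤ M := by
    calc M ^ (p - 1) ≤ M ^ (1:ℝ) :=
          Real.rpow_le_rpow_of_exponent_le hM1.le (by linarith)
      _ = M := Real.rpow_one M
  have hAM : A ≤ M := hMp ▸ hMA
  have hsle : s ≤ t / M := (le_div_iff₀ hM0).mpr (by linarith)
  have hsletop : s ≤ t := le_trans hsle (by
    rw [div_le_iff₀ hM0]; nlinarith)
  have htp : t ^ (p - 1) * t = t ^ p := by
    rw [← Real.rpow_add_one ht.ne' (p - 1)]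
    norm_num
  have b1 : t ^ (p - 1) * s ≤ u := by
    have h1 : t ^ (p - 1) * s ≤ t ^ (p - 1) * (t / M) :=
      mul_le_mul_of_nonneg_left hsle (Real.rpow_nonneg ht.le _)
    have h2 : t ^ (p - 1) * (t / M) = t ^ p / M := by
      rw [mul_div_assoc'] ; rw [htp]
    have h3 : t ^ p / M ≤ t ^ p / A := by
      apply div_le_div_of_nonneg_left (by positivity) hA0 hAM
    linarith
  have hsp1 : s ^ (p - 1) ≤ t ^ (p - 1) / A := by
    calc s ^ (p - 1) ≤ (t / M) ^ (p - 1) :=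
          Real.rpow_le_rpow hs.le hsle (by linarith)
      _ = t ^ (p - 1) / M ^ (p - 1) := Real.div_rpow ht.le hM0.le _
      _ = t ^ (p - 1) / A := by rw [hMp]
  have b2 : s ^ (p - 1) * t ≤ u := by
    have := mul_le_mul_of_nonneg_right hsp1 ht.le
    rw [div_mul_eq_mul_div, htp] at this
    exact this
  have b3 : s ^ p ≤ u := by
    have h1 : s ^ p = s ^ (p - 1) * s := by
      rw [← Real.rpow_add_one hs.ne' (p - 1)]
      norm_num
    have h2 : s ^ (p - 1) * s ≤ (t ^ (p - 1) / A) * t :=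
      mul_le_mul hsp1 hsletop hs.le (by positivity)
    rw [div_mul_eq_mul_div, htp] at h2
    linarith
  have hu : A * u = t ^ p := by
    rw [hu_def]
    field_simp
  have hp0 : (0:ℝ) ≤ p := by linarith
  have hKp0 : (0:ℝ) ≤ 2 * K * p := by positivity
  have hu' : (2 * p + 1 + 2 * K * p) * u = t ^ p := by rw [← hA]; exact hu
  nlinarith [mul_le_mul_of_nonneg_left b1 hp0, mul_le_mul_of_nonneg_left b2 hp0,
    mul_le_mul_of_nonneg_left b2 hKp0, b3, hu']


set_option maxHeartbeats 1000000 in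
open scoped Classical in
theorem stmt5 (d : ℕ) (p K : ℝ) (hp : 1 < p) (hp2 : p < 2) (hK : 0 ≤ K) :
    ∃ ε : ℝ, 0 < ε ∧ ε < (p - 1) / 2 ∧
      ∀ a b : EuclideanSpace ℝ (Fin d),
        (if ‖b‖ ≥ (Real.sqrt ((1/2) * (((p-1)/(2*ε)) ^ (2/(2-p))) + 1/2) - 1) * ‖a‖ then
            2 * K * p * ‖a‖ ^ (p - 1) * ‖b‖
          else p * ε * ‖a‖ ^ (p - 2) * ‖b‖ ^ 2) ≤
        ‖a + b‖ ^ p - ‖a‖ ^ p -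
          (if a ≠ 0 then p * ‖a‖ ^ (p - 2) * (inner ℝ a b : ℝ) else 0) := by
  have hp1 : (0:ℝ) < p - 1 := by linarith
  have h2p : (0:ℝ) < 2 - p := by linarith
  have hA1 : (1:ℝ) < 2*p + 1 + 2*K*p := by nlinarith
  have hA0 : (0:ℝ) < 2*p + 1 + 2*K*p := by linarith
  set M : ℝ := (2*p + 1 + 2*K*p) ^ ((1:ℝ)/(p-1)) with hMdef
  have hM1 : 1 < M := by
    rw [hMdef]
    exact (Real.one_lt_rpow_iff_of_pos hA0).mpr (Or.inl ⟨hA1, by positivity⟩)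
  have hMp : M ^ (p-1) = 2*p + 1 + 2*K*p := by
    rw [hMdef, ← Real.rpow_mul hA0.le, one_div_mul_cancel (ne_of_gt hp1), Real.rpow_one]
  have hMsq1 : (1:ℝ) < 2*(M+1)^2 - 1 := by nlinarith
  set C : ℝ := (2*(M+1)^2 - 1) ^ ((2-p)/2) with hCdef
  have hC1 : 1 < C := by
    rw [hCdef]
    exact (Real.one_lt_rpow_iff_of_pos (by linarith)).mpr (Or.inl ⟨hMsq1, by positivity⟩)
  have hC0 : (0:ℝ) < C := by linarith
  refine ⟨(p-1)/(2*C), by positivity, ?_, ?_⟩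
  · rw [div_lt_div_iff₀ (by positivity) (by norm_num)]
    nlinarith
  intro a b
  have hθ : Real.sqrt ((1/2) * (((p-1)/(2*((p-1)/(2*C)))) ^ (2/(2-p))) + 1/2) - 1 = M := by
    have e1 : (p-1)/(2*((p-1)/(2*C))) = C := by
      field_simp
    rw [e1, hCdef, ← Real.rpow_mul (by linarith : (0:ℝ) ≤ 2*(M+1)^2 - 1)]
    rw [show (2-p)/2 * (2/(2-p)) = 1 by field_simp, Real.rpow_one]
    rw [show (1:ℝ)/2 * (2*(M+1)^2 - 1) + 1/2 = (M+1)^2 by ring,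
      Real.sqrt_sq (by linarith : (0:ℝ) ≤ M+1)]
    ring
  rw [hθ]
  by_cases hge : ‖b‖ ≥ M * ‖a‖
  · rw [if_pos hge]
    rcases eq_or_ne a 0 with rfl | ha
    · rw [if_neg (by simp)]
      simp only [zero_add, norm_zero, Real.zero_rpow (show p - 1 ≠ 0 by linarith),
        Real.zero_rpow (show p ≠ 0 by linarith), mul_zero, zero_mul, sub_zero]
      exact Real.rpow_nonneg (norm_nonneg b) p
    · rw [if_pos ha]
      have hs : 0 < ‖a‖ := norm_pos_iff.mpr ha
      have ht : 0 < ‖b‖ := lt_of_lt_of_le (by positivity) hge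
      have hts : ‖a‖ ≤ ‖b‖ := by nlinarith
      have hinner : (inner ℝ a b : ℝ) ≤ ‖a‖ * ‖b‖ := by
        have h1 := abs_real_inner_le_norm a b
        have h2 := le_abs_self (inner ℝ a b : ℝ)
        linarith
      have hsub : ‖b‖ - ‖a‖ ≤ ‖a + b‖ := by
        have h := norm_sub_le (a + b) a
        rw [add_sub_cancel_left] at h
        linarith
      have i2 : (‖b‖ - ‖a‖) ^ p ≤ ‖a + b‖ ^ p :=
        Real.rpow_le_rpow (by linarith) hsub (by linarith)
      have i1 : ‖b‖ ^ p - p * (‖b‖ ^ (p-1) * ‖a‖) ≤ (‖b‖ - ‖a‖) ^ p := by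
        have hb1 : (-1:ℝ) ≤ -(‖a‖/‖b‖) := by
          have : ‖a‖/‖b‖ ≤ 1 := (div_le_one ht).mpr hts
          linarith
        have bern := one_add_mul_self_le_rpow_one_add hb1 hp.le
        have hmul := mul_le_mul_of_nonneg_left bern (Real.rpow_nonneg ht.le p)
        have htp : ‖b‖ ^ (p-1) * ‖b‖ = ‖b‖ ^ p := by
          rw [← Real.rpow_add_one ht.ne' (p-1)]
          norm_num
        have e2 : ‖b‖ ^ p * (1 + -(‖a‖/‖b‖)) ^ p = (‖b‖ - ‖a‖) ^ p := by
          rw [← Real.mul_rpow ht.le (by rw [← sub_eq_add_neg, sub_nonneg]; exact (div_le_one ht).mpr hts)]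
          congr 1
          field_simp
          ring
        have e3 : ‖b‖ ^ p * (1 + p * -(‖a‖/‖b‖)) = ‖b‖ ^ p - p * (‖b‖ ^ (p-1) * ‖a‖) := by
          have e4 : ‖b‖ ^ p * (‖a‖/‖b‖) = ‖b‖ ^ (p-1) * ‖a‖ := by
            rw [← htp]
            field_simp
          calc ‖b‖ ^ p * (1 + p * -(‖a‖/‖b‖))
              = ‖b‖ ^ p - p * (‖b‖ ^ p * (‖a‖/‖b‖)) := by ring
            _ = ‖b‖ ^ p - p * (‖b‖ ^ (p-1) * ‖a‖) := by rw [e4]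
        rw [e3, e2] at hmul
        exact hmul
      have hs2 : ‖a‖ ^ (p-2) * ‖a‖ = ‖a‖ ^ (p-1) := by
        rw [← Real.rpow_add_one hs.ne' (p-2)]
        congr 1
        ring
      have hinner2 : p * ‖a‖ ^ (p-2) * (inner ℝ a b : ℝ) ≤ p * (‖a‖ ^ (p-1) * ‖b‖) := by
        have h1 := mul_le_mul_of_nonneg_left hinner
          (by positivity : (0:ℝ) ≤ p * ‖a‖ ^ (p-2))
        calc p * ‖a‖ ^ (p-2) * (inner ℝ a b : ℝ)
            ≤ p * ‖a‖ ^ (p-2) * (‖a‖ * ‖b‖) := h1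
          _ = p * (‖a‖ ^ (p-1) * ‖b‖) := by rw [← hs2]; ring
      have hsc := scalar_case1 hp hp2 hK hM1 hMp hs hge
      linarith
  · rw [if_neg hge]
    push_neg at hge
    have ha : a ≠ 0 := by
      intro h
      rw [h, norm_zero, mul_zero] at hge
      exact absurd hge (not_lt.mpr (norm_nonneg b))
    rw [if_pos ha]
    have hs : 0 < ‖a‖ := norm_pos_iff.mpr ha
    have hcore := core hp hp2 a b
    have k1 : (M+1:ℝ) ^ (2-p) ≤ C := by
      have e1 : ((M+1:ℝ)^2) ^ ((2-p)/2) = (M+1) ^ (2-p) := by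
        rw [← Real.rpow_natCast_mul (by linarith : (0:ℝ) ≤ M+1) 2 ((2-p)/2)]
        congr 1
        push_cast
        ring
      rw [← e1, hCdef]
      exact Real.rpow_le_rpow (by positivity) (by nlinarith) (by linarith)
    have k2 : 1/C ≤ (M+1:ℝ) ^ (p-2) := by
      rw [show p-2 = -(2-p) by ring, Real.rpow_neg (by linarith : (0:ℝ) ≤ M+1), ← one_div]
      exact one_div_le_one_div_of_le (by positivity) k1
    have k3 : ((M+1)*‖a‖) ^ (p-2) ≤ (‖a‖ + ‖b‖) ^ (p-2) :=
      Real.rpow_le_rpow_of_nonpos (by positivity) (by nlinarith [norm_nonneg b]) (by linarith)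
    have k4 : (M+1:ℝ)^(p-2) * ‖a‖^(p-2) = ((M+1)*‖a‖)^(p-2) :=
      (Real.mul_rpow (by linarith) hs.le).symm
    have hfac : (p-1)/(2*C) * ‖a‖^(p-2) ≤ (p-1)/2 * (‖a‖+‖b‖)^(p-2) := by
      have h1 : (p-1)/(2*C) * ‖a‖^(p-2) = (p-1)/2 * (1/C * ‖a‖^(p-2)) := by ring
      have h2 : 1/C * ‖a‖^(p-2) ≤ (M+1:ℝ)^(p-2) * ‖a‖^(p-2) :=
        mul_le_mul_of_nonneg_right k2 (Real.rpow_nonneg hs.le _)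
      have h3 : (M+1:ℝ)^(p-2) * ‖a‖^(p-2) ≤ (‖a‖+‖b‖)^(p-2) := k4 ▸ k3
      rw [h1]
      exact mul_le_mul_of_nonneg_left (h2.trans h3) (by linarith)
    have hmul := mul_le_mul_of_nonneg_left hfac (by positivity : (0:ℝ) ≤ p * ‖b‖^2)
    linarith [hcore, hmul]
end

section
/- Let $p \in (1, 2)$, $K \geq 0$, and $\varepsilon > 0$ with $\vartheta(\varepsilon, p) = \sqrt{\tfrac{1}{2}(\tfrac{p-1}{2\varepsilon})^{2/(2-p)} + \tfrac{1}{2}} - 1$. For $t \in \mathbb{R}$ and $\tau^2 \geq 0$ with $(t^2 + \tau^2)^{1/2} < \vartheta(\varepsilon, p)$ and $\varepsilon < \tfrac{p-1}{2}$, it holds that $\left((1+t)^2 + \tau^2\right)^{p/2} - 1 - pt \geq p\varepsilon(t^2 + \tau^2)$. -/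
open Real Set

set_option maxHeartbeats 1000000 in
lemma key_ineq (p ε t q : ℝ) (hp : 1 < p) (hp2 : p < 2) (hε : 0 < ε) (hq : 0 < q)
    (hC : 2 * ε ≤ (p - 1) * (1 + Real.sqrt (t ^ 2 + q)) ^ (p - 2)) :
    p * ε * (t ^ 2 + q) ≤ ((1 + t) ^ 2 + q) ^ (p / 2) - 1 - p * t := by
  set u : ℝ := t ^ 2 + q with hu
  have hu0 : 0 < u := by positivity
  set m : ℝ := Real.sqrt u with hm
  have hm0 : 0 ≤ m := Real.sqrt_nonneg u
  have hm2 : m ^ 2 = u := Real.sq_sqrt hu0.le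
  have htm : t ≤ m := by
    calc t ≤ |t| := le_abs_self t
    _ = Real.sqrt (t ^ 2) := (Real.sqrt_sq_eq_abs t).symm
    _ ≤ m := Real.sqrt_le_sqrt (by nlinarith)
  set B : ℝ → ℝ := fun s => 1 + 2 * t * s + u * s ^ 2 with hB
  have hBpos : ∀ s, 0 < B s := by
    intro s
    rcases eq_or_ne s 0 with rfl | hs
    · simp [hB]
    · have h1 : 0 < u * s ^ 2 := by positivity
      have : (t * s + 1) ^ 2 + q * s ^ 2 = B s := by simp only [hB, hu]; ring
      nlinarith [sq_nonneg (t * s + 1)]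
  have hBd : ∀ s : ℝ, HasDerivAt B (2 * t + 2 * u * s) s := by
    intro s
    have h1 : HasDerivAt (fun s : ℝ => 1 + 2 * t * s) (2 * t) s := by
      simpa using ((hasDerivAt_id s).const_mul (2 * t)).const_add 1
    have h2 : HasDerivAt (fun s : ℝ => u * s ^ 2) (u * (2 * s)) s := by
      simpa using (hasDerivAt_pow 2 s).const_mul u
    simp only [hB]; exact (h1.add h2).congr_deriv (by ring)
  set g : ℝ → ℝ := fun s => B s ^ (p / 2) with hg
  set g1 : ℝ → ℝ := fun s => (2 * t + 2 * u * s) * (p / 2) * B s ^ (p / 2 - 1) with hg1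
  have hgd : ∀ s : ℝ, HasDerivAt g (g1 s) s := fun s =>
    (hBd s).rpow_const (Or.inl (hBpos s).ne')
  set g2 : ℝ → ℝ := fun s => (2 * u) * (p / 2) * B s ^ (p / 2 - 1) +
      (2 * t + 2 * u * s) * (p / 2) * ((2 * t + 2 * u * s) * (p / 2 - 1) * B s ^ (p / 2 - 1 - 1))
    with hg2
  have hg1d : ∀ s : ℝ, HasDerivAt g1 (g2 s) s := by
    intro s
    have hf1 : HasDerivAt (fun s : ℝ => (2 * t + 2 * u * s) * (p / 2)) (2 * u * (p / 2)) s := by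
      simpa using (((hasDerivAt_id s).const_mul (2 * u)).const_add (2 * t)).mul_const (p / 2)
    have hf2 : HasDerivAt (fun s : ℝ => B s ^ (p / 2 - 1))
        ((2 * t + 2 * u * s) * (p / 2 - 1) * B s ^ (p / 2 - 1 - 1)) s :=
      (hBd s).rpow_const (Or.inl (hBpos s).ne')
    simp only [hg1, hg2]; exact (hf1.mul hf2).congr_deriv (by ring)
  set C : ℝ := p * (p - 1) * u * (1 + m) ^ (p - 2) with hCdef
  -- lower bound on g2 on [0,1]
  have hg2lb : ∀ s ∈ Icc (0:ℝ) 1, C ≤ g2 s := by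
    intro s hs
    obtain ⟨hs0, hs1⟩ := hs
    have hb := hBpos s
    have hble : B s ≤ (1 + m) ^ 2 := by
      have h1 : t * s ≤ m * s := mul_le_mul_of_nonneg_right htm hs0
      have h2 : u * s ^ 2 ≤ m ^ 2 := by
        rw [hm2]; nlinarith [mul_nonneg hu0.le (by nlinarith : (0:ℝ) ≤ 1 - s ^ 2)]
      have h3 : m * s ≤ m := by nlinarith
      simp only [hB]; nlinarith
    have hmono : ((1 + m) ^ 2 : ℝ) ^ (p / 2 - 1) ≤ B s ^ (p / 2 - 1) :=
      Real.rpow_le_rpow_of_nonpos hb hble (by linarith)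
    have hpow : ((1 + m) ^ 2 : ℝ) ^ (p / 2 - 1) = (1 + m) ^ (p - 2) := by
      rw [← Real.rpow_natCast (1 + m) 2, ← Real.rpow_mul (by positivity)]
      congr 1
      push_cast; ring
    have hkey : (1 + m) ^ (p - 2) ≤ B s ^ (p / 2 - 1) := hpow ▸ hmono
    -- identity : (t + u*s)^2 = B s * u - q
    have hid : (t + u * s) ^ 2 = B s * u - q := by simp only [hB, hu]; ring
    have hsplit : B s ^ (p / 2 - 1) = B s ^ (p / 2 - 1 - 1) * B s := by
      rw [← Real.rpow_add_one hb.ne' (p / 2 - 1 - 1)]; ring_nf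
    have hg2eq : g2 s = B s ^ (p / 2 - 1 - 1) * (p * (p - 1) * u * B s + p * (2 - p) * q) := by
      simp only [hg2]
      rw [hsplit]
      linear_combination (p * (p - 2) * B s ^ (p / 2 - 1 - 1)) * hid
    have hbp : (0:ℝ) < B s ^ (p / 2 - 1 - 1) := Real.rpow_pos_of_pos hb _
    have h5 : p * (p - 1) * u * B s ^ (p / 2 - 1) ≤ g2 s := by
      rw [hg2eq, hsplit]
      have h6 : 0 ≤ B s ^ (p / 2 - 1 - 1) * (p * (2 - p) * q) :=
        mul_nonneg hbp.le (mul_nonneg (mul_nonneg (by linarith) (by linarith)) hq.le)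
      nlinarith [h6]
    calc C ≤ p * (p - 1) * u * B s ^ (p / 2 - 1) := by
          have := hkey
          have hc : 0 ≤ p * (p - 1) * u := by
            have := mul_pos (mul_pos (by linarith : (0:ℝ) < p) (by linarith : (0:ℝ) < p - 1)) hu0
            linarith
          simp only [hCdef]
          exact mul_le_mul_of_nonneg_left hkey hc
      _ ≤ g2 s := h5
  -- monotone step 1
  have hφd : ∀ s : ℝ, HasDerivAt (fun s => g1 s - C * s) (g2 s - C) s := fun s =>
    (hg1d s).sub (by simpa using (hasDerivAt_id s).const_mul C)
  have mono1 : MonotoneOn (fun s => g1 s - C * s) (Icc (0:ℝ) 1) := by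
    apply monotoneOn_of_deriv_nonneg (convex_Icc 0 1)
    · exact fun s _ => (hφd s).continuousAt.continuousWithinAt
    · exact fun s _ => (hφd s).differentiableAt.differentiableWithinAt
    · intro s hs
      rw [interior_Icc] at hs
      rw [(hφd s).deriv]
      have := hg2lb s ⟨hs.1.le, hs.2.le⟩
      linarith
  have hg10 : g1 0 = p * t := by simp [hg1, hB]; ring
  -- monotone step 2
  have hψd : ∀ s : ℝ, HasDerivAt (fun s => g s - p * t * s - C * (s ^ 2 / 2))
      (g1 s - p * t - C * s) s := by
    intro s
    have h1 : HasDerivAt (fun s : ℝ => p * t * s) (p * t) s := by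
      simpa using (hasDerivAt_id s).const_mul (p * t)
    have h2 : HasDerivAt (fun y : ℝ => C / 2 * y ^ 2) (C * s) s := by
      have h := (hasDerivAt_pow 2 s).const_mul (C / 2)
      exact h.congr_deriv (by push_cast; ring)
    have heq : (fun y : ℝ => C * (y ^ 2 / 2)) = fun y : ℝ => C / 2 * y ^ 2 := by
      funext y; ring
    rw [← heq] at h2
    exact ((hgd s).sub h1).sub h2
  have mono2 : MonotoneOn (fun s => g s - p * t * s - C * (s ^ 2 / 2)) (Icc (0:ℝ) 1) := by
    apply monotoneOn_of_deriv_nonneg (convex_Icc 0 1)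
    · exact fun s _ => (hψd s).continuousAt.continuousWithinAt
    · exact fun s _ => (hψd s).differentiableAt.differentiableWithinAt
    · intro s hs
      rw [interior_Icc] at hs
      rw [(hψd s).deriv]
      have h0 : g1 0 - C * 0 ≤ g1 s - C * s :=
        mono1 (by simp) ⟨hs.1.le, hs.2.le⟩ hs.1.le
      rw [hg10] at h0
      linarith
  have hfinal := mono2 (by simp) (by simp) zero_le_one
  have hg0 : g 0 = 1 := by simp [hg, hB]
  have hg1v : g 1 = ((1 + t) ^ 2 + q) ^ (p / 2) := by
    simp only [hg, hB, hu]; norm_num; ring_nf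
  simp only [hg0] at hfinal
  -- hfinal : 1 - 0 - 0 ≤ g 1 - p*t - C/2
  have hCb : p * ε * u * 2 ≤ C := by
    have h1 : (0:ℝ) < (1 + m) ^ (p - 2) := Real.rpow_pos_of_pos (by linarith) _
    have := mul_le_mul_of_nonneg_left hC (le_of_lt (mul_pos (by linarith : (0:ℝ) < p) hu0))
    simp only [hCdef]
    nlinarith
  norm_num at hfinal
  rw [hg1v] at hfinal
  clear_value C u m
  linarith [hfinal, hCb]

theorem stmt6 (p K ε t tsq : ℝ) (hp : 1 < p) (hp2 : p < 2) (hK : 0 ≤ K)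
    (hε : 0 < ε) (hε2 : ε < (p - 1) / 2) (htsq : 0 ≤ tsq)
    (hsmall : Real.sqrt (t ^ 2 + tsq) <
      Real.sqrt ((1/2) * (((p-1)/(2*ε)) ^ (2/(2-p))) + 1/2) - 1) :
    p * ε * (t ^ 2 + tsq) ≤ ((1 + t) ^ 2 + tsq) ^ (p / 2) - 1 - p * t := by
  have h2p : (0:ℝ) < 2 - p := by linarith
  set M : ℝ := ((p-1)/(2*ε)) ^ (2/(2-p)) with hMdef
  set A : ℝ := (1/2) * M + 1/2 with hAdef
  have hbase1 : (1:ℝ) < (p-1)/(2*ε) := by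
    rw [lt_div_iff₀ (by linarith)]; linarith
  have hM1 : (1:ℝ) ≤ M := Real.one_le_rpow hbase1.le (by positivity)
  have hAM : A ≤ M := by rw [hAdef]; linarith
  have hA0 : (0:ℝ) ≤ A := by rw [hAdef]; linarith
  have hθ0 : (0:ℝ) ≤ Real.sqrt A - 1 :=
    le_trans (Real.sqrt_nonneg _) hsmall.le
  have hsq : t ^ 2 + tsq < (Real.sqrt A - 1) ^ 2 := by
    have h1 : Real.sqrt (t ^ 2 + tsq) < Real.sqrt A - 1 := hsmall
    have h2 : Real.sqrt (t ^ 2 + tsq) ^ 2 < (Real.sqrt A - 1) ^ 2 :=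
      pow_lt_pow_left₀ h1 (Real.sqrt_nonneg _) (by norm_num)
    rwa [Real.sq_sqrt (by positivity)] at h2
  set E : ℝ := (Real.sqrt A - 1) ^ 2 - (t ^ 2 + tsq) with hEdef
  have hE0 : 0 < E := by rw [hEdef]; linarith
  -- the inequality for all q slightly above tsq
  have hF : ∀ q ∈ Set.Ioc tsq (tsq + E/2),
      p * ε * (t ^ 2 + q) ≤ ((1 + t) ^ 2 + q) ^ (p / 2) - 1 - p * t := by
    intro q hq
    obtain ⟨hq1, hq2⟩ := hq
    have hq0 : 0 < q - tsq := by linarith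
    set m : ℝ := Real.sqrt (t ^ 2 + q) with hmdef
    have hm0 : 0 ≤ m := Real.sqrt_nonneg _
    have htq : t ^ 2 + q < (Real.sqrt A - 1) ^ 2 := by
      rw [hEdef] at hq2; linarith
    have hmlt : m < Real.sqrt A - 1 := by
      rw [hmdef]
      calc Real.sqrt (t ^ 2 + q) < Real.sqrt ((Real.sqrt A - 1) ^ 2) :=
            Real.sqrt_lt_sqrt (by nlinarith [sq_nonneg t]) htq
        _ = Real.sqrt A - 1 := Real.sqrt_sq hθ0
    have hsqA : (1 + m) ^ 2 < A := by
      have h1 : 1 + m < Real.sqrt A := by linarith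
      have h2 : (1 + m) ^ 2 < Real.sqrt A ^ 2 :=
        pow_lt_pow_left₀ h1 (by linarith) (by norm_num)
      rwa [Real.sq_sqrt hA0] at h2
    have hMle : ((1 + m) ^ 2 : ℝ) ≤ M := le_of_lt (lt_of_lt_of_le hsqA hAM)
    have h2' : (((1 + m) ^ 2 : ℝ)) ^ ((2-p)/2) ≤ M ^ ((2-p)/2) :=
      Real.rpow_le_rpow (by positivity) hMle (by positivity)
    have h3 : (((1 + m) ^ 2 : ℝ)) ^ ((2-p)/2) = (1 + m) ^ (2 - p) := by
      rw [← Real.rpow_natCast (1 + m) 2, ← Real.rpow_mul (by positivity)]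
      congr 1
      push_cast; ring
    have h4 : M ^ ((2-p)/2) = (p-1)/(2*ε) := by
      rw [hMdef, ← Real.rpow_mul (by positivity),
        show (2/(2-p)) * ((2-p)/2) = 1 by field_simp, Real.rpow_one]
    have h5 : (1 + m) ^ (2 - p) ≤ (p-1)/(2*ε) := by rw [← h3, ← h4]; exact h2'
    have hpos : (0:ℝ) < (1 + m) ^ (2 - p) := Real.rpow_pos_of_pos (by linarith) _
    have hC : 2 * ε ≤ (p - 1) * (1 + m) ^ (p - 2) := by
      have h6 : 2 * ε * (1 + m) ^ (2 - p) ≤ p - 1 := by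
        have h8 := mul_le_mul_of_nonneg_left h5 (by linarith : (0:ℝ) ≤ 2 * ε)
        have h9 : 2 * ε * ((p - 1) / (2 * ε)) = p - 1 := by field_simp
        linarith
      have h7 : (1 + m) ^ (p - 2) = ((1 + m) ^ (2 - p))⁻¹ := by
        rw [show p - 2 = -(2 - p) by ring, Real.rpow_neg (by linarith)]
      rw [h7, ← div_eq_mul_inv, le_div_iff₀ hpos]
      linarith
    exact key_ineq p ε t q hp hp2 hε (by linarith) (by simpa only [hmdef] using hC)
  -- limit as q → tsq from the right
  have hcont : ContinuousAt (fun q : ℝ => ((1 + t) ^ 2 + q) ^ (p / 2) - 1 - p * t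
      - p * ε * (t ^ 2 + q)) tsq := by
    apply ContinuousAt.sub
    apply ContinuousAt.sub
    apply ContinuousAt.sub
    · exact (Real.continuousAt_rpow_const _ _ (Or.inr (by positivity))).comp
        (by fun_prop)
    · exact continuousAt_const
    · exact continuousAt_const
    · fun_prop
  have htend := hcont.continuousWithinAt (s := Set.Ioi tsq)
  have hmem : Set.Ioc tsq (tsq + E/2) ∈ nhdsWithin tsq (Set.Ioi tsq) :=
    Ioc_mem_nhdsGT_of_mem ⟨le_refl _, by linarith⟩
  have hge : 0 ≤ ((1 + t) ^ 2 + tsq) ^ (p / 2) - 1 - p * t - p * ε * (t ^ 2 + tsq) := by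
    refine ge_of_tendsto htend ?_
    filter_upwards [hmem] with q hq
    have := hF q hq
    linarith
  linarith
end

section
/- Let $p \in (1, 2)$, $K \geq 0$, and $t \in \mathbb{R}$, $\tau^2 \geq 0$ with $t^2 + \tau^2 \geq \alpha(K,p)^2$ where $\alpha(K,p) = (4(2K+2)+1)^{1/(p-1)}$. Then $\left((1+t)^2 + \tau^2\right)^{p/2} - 1 - pt \geq 2Kp\left(t^2 + \tau^2\right)^{1/2}$. -/
open Real

theorem stmt9 (p K t tsq : ℝ) (hp : 1 < p) (hp2 : p < 2) (hK : 0 ≤ K) (htsq : 0 ≤ tsq)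
    (hbig : ((4 * (2 * K + 2) + 1) ^ (1 / (p - 1))) ^ 2 ≤ t ^ 2 + tsq) :
    2 * K * p * (t ^ 2 + tsq) ^ (1 / 2 : ℝ) ≤
      ((1 + t) ^ 2 + tsq) ^ (p / 2) - 1 - p * t := by
  have hs : (0:ℝ) ≤ t ^ 2 + tsq := by positivity
  set α : ℝ := (4 * (2 * K + 2) + 1) ^ (1 / (p - 1)) with hα
  have hp1 : 0 < p - 1 := by linarith
  have hb9 : (9:ℝ) ≤ 4 * (2 * K + 2) + 1 := by linarith
  have hα9 : (9:ℝ) ≤ α := by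
    calc (9:ℝ) = 9 ^ (1:ℝ) := (Real.rpow_one 9).symm
    _ ≤ (9:ℝ) ^ (1 / (p - 1)) := by
        apply Real.rpow_le_rpow_of_exponent_le (by norm_num)
        rw [le_div_iff₀ hp1]; linarith
    _ ≤ α := Real.rpow_le_rpow (by norm_num) hb9 (by positivity)
  set x : ℝ := Real.sqrt (t ^ 2 + tsq) with hx
  rw [← Real.sqrt_eq_rpow]
  have hx2 : x ^ 2 = t ^ 2 + tsq := Real.sq_sqrt hs
  have hαx : α ≤ x := by
    have h := Real.sqrt_le_sqrt hbig
    rwa [Real.sqrt_sq (by positivity)] at h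
  have hx9 : (9:ℝ) ≤ x := le_trans hα9 hαx
  have hxpos : (0:ℝ) < x := by linarith
  have ht : t ≤ x := by nlinarith [le_abs_self t, sq_abs t, abs_nonneg t]
  have htx : -x ≤ t := by nlinarith [neg_abs_le t, sq_abs t, abs_nonneg t]
  have hsq : (x - 1) ^ 2 ≤ (1 + t) ^ 2 + tsq := by nlinarith
  have hstep1 : (x - 1) ^ p ≤ ((1 + t) ^ 2 + tsq) ^ (p / 2) := by
    have h1 : (((x - 1) ^ 2 : ℝ)) ^ (p / 2) ≤ ((1 + t) ^ 2 + tsq) ^ (p / 2) :=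
      Real.rpow_le_rpow (by positivity) hsq (by positivity)
    have h2 : (((x - 1) ^ 2 : ℝ)) ^ (p / 2) = (x - 1) ^ p := by
      rw [← Real.rpow_natCast (x - 1) 2, ← Real.rpow_mul (by linarith)]
      norm_num
      congr 1
      ring
    rw [h2] at h1; exact h1
  have hαp : α ^ (p - 1) = 4 * (2 * K + 2) + 1 := by
    rw [hα, ← Real.rpow_mul (by linarith), one_div,
      inv_mul_cancel₀ (ne_of_gt hp1), Real.rpow_one]
  have hxp1 : 4 * (2 * K + 2) + 1 ≤ x ^ (p - 1) := by
    rw [← hαp]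
    exact Real.rpow_le_rpow (by positivity) hαx (le_of_lt hp1)
  have hsplit : x ^ p = x ^ (p - 1) * x := by
    calc x ^ p = x ^ (p - 1 + 1) := by ring_nf
    _ = x ^ (p - 1) * x ^ (1:ℝ) := Real.rpow_add hxpos _ _
    _ = x ^ (p - 1) * x := by rw [Real.rpow_one]
  have hxp : (4 * (2 * K + 2) + 1) * x ≤ x ^ p := by
    rw [hsplit]
    exact mul_le_mul_of_nonneg_right hxp1 (le_of_lt hxpos)
  have hfrac : (8 / 9 : ℝ) * x ≤ x - 1 := by linarith
  have hstep2 : (8 / 9 : ℝ) ^ p * x ^ p ≤ (x - 1) ^ p := by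
    calc (8 / 9 : ℝ) ^ p * x ^ p = ((8 / 9 : ℝ) * x) ^ p :=
        (Real.mul_rpow (by norm_num) (le_of_lt hxpos)).symm
    _ ≤ (x - 1) ^ p := Real.rpow_le_rpow (by positivity) hfrac (by linarith)
  have h89 : (64 / 81 : ℝ) ≤ (8 / 9 : ℝ) ^ p := by
    have h := Real.rpow_le_rpow_of_exponent_ge (x := (8/9:ℝ)) (by norm_num) (by norm_num)
      (le_of_lt hp2)
    have h2 : (8 / 9 : ℝ) ^ (2:ℝ) = 64 / 81 := by
      rw [show (2:ℝ) = ((2:ℕ):ℝ) by norm_num, Real.rpow_natCast]; norm_num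
    rw [h2] at h; exact h
  have hxppos : (0:ℝ) ≤ x ^ p := Real.rpow_nonneg (le_of_lt hxpos) p
  have hkey : (64 / 81 : ℝ) * ((4 * (2 * K + 2) + 1) * x) ≤ (x - 1) ^ p := by
    calc (64 / 81 : ℝ) * ((4 * (2 * K + 2) + 1) * x) ≤ (64 / 81 : ℝ) * x ^ p := by
          apply mul_le_mul_of_nonneg_left hxp; norm_num
    _ ≤ (8 / 9 : ℝ) ^ p * x ^ p := mul_le_mul_of_nonneg_right h89 hxppos
    _ ≤ (x - 1) ^ p := hstep2
  have hKpx : 2 * K * p * x ≤ 4 * K * x := by nlinarith [mul_nonneg (mul_nonneg hK hxpos.le) (by linarith : (0:ℝ) ≤ 2 - p)]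
  nlinarith [hstep1, hkey, mul_le_mul_of_nonneg_right (le_of_lt hp2) (le_of_lt hxpos)]
end

section
/- Let $p \in (1,2)$, $\varepsilon \in (0, \tfrac{p-1}{2})$, and $\tau^2 \geq 0$. Define the function $\varpi$ on $(-1, 0]$ by $\varpi(x) = (2-p)\varepsilon x^2 + (2\varepsilon + 1 - p)x + (2-p)\varepsilon\tau^2 + \tau^2\tfrac{1 - 2\varepsilon}{1+x}$. Then $\varpi$ is decreasing on $(-1, 0]$ and $\varpi(x) \geq \varpi(0) = \tau^2(1 - p\varepsilon) \geq 0$ for all $x \in (-1, 0]$. -/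
open Real Set

theorem stmt12 (p ε tsq : ℝ) (hp : 1 < p) (hp2 : p < 2) (hε : 0 < ε)
    (hε2 : ε < (p - 1) / 2) (htsq : 0 ≤ tsq)
    (ϖ : ℝ → ℝ)
    (hϖ : ϖ = fun x => (2 - p) * ε * x ^ 2 + (2 * ε + 1 - p) * x + (2 - p) * ε * tsq
      + tsq * ((1 - 2 * ε) / (1 + x))) :
    StrictAntiOn ϖ (Ioc (-1 : ℝ) 0) ∧
    (∀ x ∈ Ioc (-1 : ℝ) 0, ϖ 0 ≤ ϖ x) ∧
    ϖ 0 = tsq * (1 - p * ε) ∧ 0 ≤ ϖ 0 := by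
  subst hϖ
  have hanti : StrictAntiOn (fun x => (2 - p) * ε * x ^ 2 + (2 * ε + 1 - p) * x
      + (2 - p) * ε * tsq + tsq * ((1 - 2 * ε) / (1 + x))) (Ioc (-1 : ℝ) 0) := by
    intro x hx y hy hxy
    obtain ⟨hx1, hx0⟩ := hx
    obtain ⟨hy1, hy0⟩ := hy
    have hax : 0 < 1 + x := by linarith
    have hay : 0 < 1 + y := by linarith
    have hdiv : (1 - 2 * ε) / (1 + y) ≤ (1 - 2 * ε) / (1 + x) :=
      div_le_div_of_nonneg_left (by linarith) hax (by linarith)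
    have h2 := mul_le_mul_of_nonneg_left hdiv htsq
    simp only
    have hq : 0 ≤ (2 - p) * ε * (x ^ 2 - y ^ 2) := by
      apply mul_nonneg (mul_nonneg (by linarith) hε.le)
      nlinarith [mul_pos (show (0:ℝ) < -(x + y) by linarith) (show (0:ℝ) < y - x by linarith)]
    have hlin : (2 * ε + 1 - p) * y < (2 * ε + 1 - p) * x :=
      mul_lt_mul_of_neg_left hxy (by linarith)
    linarith
  have h0 : (fun x => (2 - p) * ε * x ^ 2 + (2 * ε + 1 - p) * x
      + (2 - p) * ε * tsq + tsq * ((1 - 2 * ε) / (1 + x))) 0 = tsq * (1 - p * ε) := by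
    simp only
    field_simp
    ring
  refine ⟨hanti, ?_, h0, ?_⟩
  · intro x hx
    rcases eq_or_lt_of_le hx.2 with h | h
    · rw [h]
    · exact (hanti hx (by constructor <;> norm_num) h).le
  · rw [h0]
    have hpε : p * ε ≤ 1 := by
      nlinarith [mul_lt_mul_of_pos_left hε2 (show (0:ℝ) < p by linarith),
        mul_pos (show (0:ℝ) < 2 - p by linarith) (show (0:ℝ) < p + 1 by linarith)]
    exact mul_nonneg htsq (by linarith)
end
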